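/- Let r₁ < r₂ be real numbers and let a : ℝ → ℝ be a measurable function with supp a ⊆ [r₁,r₂], ‖a‖_∞ ≤ (∫_{r₁}^{r₂} |s| ds)^{-1}, and ∫_ℝ a(r)|r| dr = 0 (i.e. a is an atom of the Hardy space ℋ¹(ℝ, |r| dr)). Then for every ε ∈ (0,1], ∫_ε^{1/ε} (1/r) (∫_{-r}^{r} a(s)|s| ds) dr ≤ 1. -/

import Mathlib

open MeasureTheory Set Filter
open scoped Real

section Stmt4Aux

lemma hasDerivAt_zero_of_factor (f g : ℝ → ℝ) (hg : ContinuousAt g 0)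
    (heq : ∀ t, f t = t * g t) : HasDerivAt f (g 0) 0 := by
  rw [hasDerivAt_iff_tendsto_slope]
  have hslope : ∀ t : ℝ, t ≠ 0 → slope f 0 t = g t := by
    intro t ht
    rw [slope_def_field, heq, heq 0]
    field_simp
    ring
  have : Tendsto g (nhdsWithin 0 {(0:ℝ)}ᶜ) (nhds (g 0)) :=
    hg.tendsto.mono_left nhdsWithin_le_nhds
  refine this.congr' ?_
  filter_upwards [self_mem_nhdsWithin] with t ht
  exact (hslope t ht).symm

lemma hasDerivAt_halfAbs (x : ℝ) : HasDerivAt (fun t : ℝ => t * |t| / 2) |x| x := by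
  rcases lt_trichotomy x 0 with hx | rfl | hx
  · have h : HasDerivAt (fun t : ℝ => -(t * t) / 2) |x| x := by
      have := (((hasDerivAt_id x).mul (hasDerivAt_id x)).neg).div_const 2
      simpa [abs_of_neg hx] using this.congr_deriv (by simp only [id_eq]; ring)
    refine h.congr_of_eventuallyEq ?_
    filter_upwards [Iio_mem_nhds hx] with t ht
    rw [abs_of_neg ht]; ring
  · have := hasDerivAt_zero_of_factor (fun t : ℝ => t * |t| / 2) (fun t => |t| / 2)
      (by fun_prop) (fun t => by ring)
    simpa using this
  · have h : HasDerivAt (fun t : ℝ => t * t / 2) |x| x := by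
      have := ((hasDerivAt_id x).mul (hasDerivAt_id x)).div_const 2
      simpa [abs_of_pos hx] using this.congr_deriv (by simp only [id_eq]; ring)
    refine h.congr_of_eventuallyEq ?_
    filter_upwards [Ioi_mem_nhds hx] with t ht
    rw [abs_of_pos ht]

lemma integral_abs_eq (p q : ℝ) : ∫ s in p..q, |s| = q * |q| / 2 - p * |p| / 2 := by
  refine intervalIntegral.integral_eq_sub_of_hasDerivAt (fun x _ => hasDerivAt_halfAbs x) ?_
  exact continuous_abs.intervalIntegrable p q

lemma hasDerivAt_Phi (M x : ℝ) :
    HasDerivAt (fun t : ℝ => t * |t| / 2 * (Real.log M - Real.log t) + t * |t| / 4)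
      (|x| * (Real.log M - Real.log x)) x := by
  rcases eq_or_ne x 0 with rfl | hx
  · have hcont : ContinuousAt (fun t : ℝ => |t| / 2 * (Real.log M - Real.log t) + |t| / 4) 0 := by
      have heq : (fun t : ℝ => |t| / 2 * (Real.log M - Real.log t) + |t| / 4)
          = fun t : ℝ => |t| / 2 * Real.log M - |t| * Real.log |t| / 2 + |t| / 4 := by
        funext t; rw [Real.log_abs]; ring
      rw [heq]
      exact ((((continuous_abs.div_const 2).mul continuous_const).sub
        ((Real.continuous_mul_log.comp continuous_abs).div_const 2)).add
        (continuous_abs.div_const 4)).continuousAt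
    have := hasDerivAt_zero_of_factor
      (fun t : ℝ => t * |t| / 2 * (Real.log M - Real.log t) + t * |t| / 4)
      (fun t : ℝ => |t| / 2 * (Real.log M - Real.log t) + |t| / 4) hcont (fun t => by ring)
    simpa using this
  · have h1 := (hasDerivAt_halfAbs x).mul
      ((hasDerivAt_const x (Real.log M)).sub (Real.hasDerivAt_log hx))
    have h3 := h1.add ((hasDerivAt_halfAbs x).div_const 2)
    have h4 : |x| * (Real.log M - Real.log x) + x * |x| / 2 * (0 - x⁻¹) + |x| / 2
        = |x| * (Real.log M - Real.log x) := by field_simp; ring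
    simp only [Pi.sub_apply] at h3
    rw [h4] at h3
    refine h3.congr_of_eventuallyEq (Eventually.of_forall fun t => by simp only [Pi.add_apply, Pi.mul_apply, Pi.sub_apply]; ring)


lemma integral_weight (M p q : ℝ) :
    ∫ s in p..q, |s| * (Real.log M - Real.log s)
      = (q * |q| / 2 * (Real.log M - Real.log q) + q * |q| / 4)
        - (p * |p| / 2 * (Real.log M - Real.log p) + p * |p| / 4) := by
  refine intervalIntegral.integral_eq_sub_of_hasDerivAt (fun x _ => hasDerivAt_Phi M x) ?_
  have h : (fun s : ℝ => |s| * (Real.log M - Real.log s))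
      = fun s => |s| * Real.log M - |s| * Real.log |s| := by
    funext s; rw [Real.log_abs]; ring
  rw [h]
  exact ((continuous_abs.mul continuous_const).sub
    (Real.continuous_mul_log.comp continuous_abs)).intervalIntegrable p q

lemma psi_bounds (M t : ℝ) (hM : 0 < M) (ht : |t| ≤ M) :
    -(M * M / 4) ≤ t * |t| / 2 * (Real.log M - Real.log t) - t * |t| / 4 ∧
      t * |t| / 2 * (Real.log M - Real.log t) - t * |t| / 4 ≤ M * M / 4 := by
  rcases lt_trichotomy t 0 with h | rfl | h
  · have hT : (0:ℝ) < -t := by linarith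
    have habs : |t| = -t := abs_of_neg h
    rw [habs] at ht ⊢
    have hlt : Real.log t = Real.log (-t) := by rw [← Real.log_abs, habs]
    rw [hlt]
    have hD0 : 0 ≤ Real.log M - Real.log (-t) :=
      sub_nonneg.2 (Real.log_le_log hT ht)
    have h5 : (Real.log M - Real.log (-t) + 1) * (-t) ≤ M := by
      rw [← le_div_iff₀ hT]
      have := Real.log_le_sub_one_of_pos (div_pos hM hT)
      rw [Real.log_div (ne_of_gt hM) (ne_of_gt hT)] at this
      linarith
    constructor
    · nlinarith [sq_nonneg (M + t), sq_nonneg t, mul_nonneg (mul_nonneg hT.le hT.le) hD0]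
    · nlinarith [mul_nonneg (mul_nonneg hT.le hT.le) hD0, sq_nonneg t, sq_nonneg M]
  · constructor <;> simp <;> positivity
  · have habs : |t| = t := abs_of_pos h
    rw [habs] at ht ⊢
    have hD0 : 0 ≤ Real.log M - Real.log t := sub_nonneg.2 (Real.log_le_log h ht)
    have h5 : (Real.log M - Real.log t + 1) * t ≤ M := by
      rw [← le_div_iff₀ h]
      have := Real.log_le_sub_one_of_pos (div_pos hM h)
      rw [Real.log_div (ne_of_gt hM) (ne_of_gt h)] at this
      linarith
    constructor
    · nlinarith [mul_nonneg (mul_nonneg h.le h.le) hD0, sq_nonneg t, sq_nonneg M]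
    · nlinarith [mul_le_mul_of_nonneg_left h5 h.le, sq_nonneg (M - t), sq_nonneg t]
lemma mulAbs_strictMono {p q : ℝ} (h : p < q) : p * |p| < q * |q| := by
  rcases abs_cases p with ⟨hp, hp'⟩ | ⟨hp, hp'⟩ <;>
    rcases abs_cases q with ⟨hq, hq'⟩ | ⟨hq, hq'⟩ <;> rw [hp, hq] <;> nlinarith

lemma key_ineq (r₁ r₂ M : ℝ) (h12 : r₁ < r₂) (hM : M = max |r₁| |r₂|) :
    (r₂ * |r₂| / 2 * (Real.log M - Real.log r₂) + r₂ * |r₂| / 4)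
      - (r₁ * |r₁| / 2 * (Real.log M - Real.log r₁) + r₁ * |r₁| / 4)
    ≤ r₂ * |r₂| / 2 - r₁ * |r₁| / 2 := by
  have h1 : |r₁| ≤ M := hM ▸ le_max_left _ _
  have h2 : |r₂| ≤ M := hM ▸ le_max_right _ _
  have hM0 : 0 < M := by
    rcases lt_or_ge 0 r₂ with h | h
    · exact lt_of_lt_of_le (abs_pos.2 h.ne') h2
    · exact lt_of_lt_of_le (abs_pos.2 (lt_of_lt_of_le h12 h).ne) h1
  -- suffices: psi r₂ ≤ psi r₁
  suffices hpsi : r₂ * |r₂| / 2 * (Real.log M - Real.log r₂) - r₂ * |r₂| / 4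
      ≤ r₁ * |r₁| / 2 * (Real.log M - Real.log r₁) - r₁ * |r₁| / 4 by linarith
  rcases (max_choice |r₁| |r₂|).imp (Eq.trans hM) (Eq.trans hM) with hc | hc
  · -- M = |r₁|
    rcases abs_cases r₁ with ⟨ha, ha'⟩ | ⟨ha, ha'⟩
    · -- r₁ ≥ 0, M = r₁ : then r₂ > M, contradiction
      exfalso
      have : r₂ ≤ |r₂| := le_abs_self _
      rw [hc, ha] at h2
      linarith
    · -- r₁ = -M
      have hr1 : r₁ = -M := by rw [hc, ha]; ring
      have hpsi1 : r₁ * |r₁| / 2 * (Real.log M - Real.log r₁) - r₁ * |r₁| / 4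
          = M * M / 4 := by
        rw [hr1, Real.log_neg_eq_log, abs_neg, abs_of_pos hM0, sub_self]
        ring
      rw [hpsi1]
      exact (psi_bounds M r₂ hM0 h2).2
  · -- M = |r₂|
    rcases abs_cases r₂ with ⟨ha, ha'⟩ | ⟨ha, ha'⟩
    · -- r₂ = M
      have hr2 : r₂ = M := by rw [hc, ha]
      have hpsi2 : r₂ * |r₂| / 2 * (Real.log M - Real.log r₂) - r₂ * |r₂| / 4
          = -(M * M / 4) := by
        rw [hr2, abs_of_pos hM0, sub_self]; ring
      rw [hpsi2]
      exact (psi_bounds M r₁ hM0 h1).1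
    · -- r₂ < 0, M = -r₂: contradiction with r₁ < r₂
      exfalso
      have h3 : -r₁ ≤ |r₁| := neg_le_abs r₁
      rw [hc, ha] at h1
      linarith
noncomputable def cl (ε x : ℝ) : ℝ := min (max ε x) (1/ε)

lemma eps_le_inv {ε : ℝ} (hε : 0 < ε) (hε1 : ε ≤ 1) : ε ≤ 1/ε :=
  hε1.trans (one_le_one_div hε hε1)

lemma cl_ge {ε : ℝ} (hε : 0 < ε) (hε1 : ε ≤ 1) (x : ℝ) : ε ≤ cl ε x :=
  le_min (le_max_left _ _) (eps_le_inv hε hε1)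

lemma cl_pos {ε : ℝ} (hε : 0 < ε) (hε1 : ε ≤ 1) (x : ℝ) : 0 < cl ε x :=
  lt_of_lt_of_le hε (cl_ge hε hε1 x)

lemma cl_le {ε : ℝ} (x : ℝ) : cl ε x ≤ 1/ε := min_le_right _ _

lemma cl_mono {ε x y : ℝ} (h : x ≤ y) : cl ε x ≤ cl ε y :=
  min_le_min (max_le_max le_rfl h) le_rfl

lemma abs_log_cl_le {ε : ℝ} (hε : 0 < ε) (hε1 : ε ≤ 1) (x : ℝ) :
    |Real.log (cl ε x)| ≤ Real.log (1/ε) := by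
  rw [abs_le]
  constructor
  · have h1 : Real.log ε ≤ Real.log (cl ε x) :=
      Real.log_le_log hε (cl_ge hε hε1 x)
    have h2 : Real.log (1/ε) = -Real.log ε := by rw [one_div, Real.log_inv]
    linarith
  · exact Real.log_le_log (cl_pos hε hε1 x) (cl_le x)

lemma cl_log_ratio {ε x y : ℝ} (hε : 0 < ε) (hε1 : ε ≤ 1) (hx : 0 < x) (hxy : x ≤ y) :
    Real.log (cl ε y) - Real.log (cl ε x) ≤ Real.log y - Real.log x := by
  have hy : 0 < y := lt_of_lt_of_le hx hxy
  have hb : (0:ℝ) < 1/ε := by positivity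
  have hlam : 1 ≤ y / x := (one_le_div hx).2 hxy
  have hlam0 : 0 ≤ y / x := by positivity
  have step : cl ε y ≤ (y / x) * cl ε x := by
    have hmax : max ε y ≤ (y / x) * max ε x := by
      apply max_le
      · calc ε ≤ (y/x) * ε := le_mul_of_one_le_left hε.le hlam
          _ ≤ (y/x) * max ε x := by
            exact mul_le_mul_of_nonneg_left (le_max_left _ _) hlam0
      · calc y = (y/x) * x := (div_mul_cancel₀ y hx.ne').symm
          _ ≤ (y/x) * max ε x := mul_le_mul_of_nonneg_left (le_max_right _ _) hlam0
    have hbb : (1:ℝ)/ε ≤ (y/x) * (1/ε) := le_mul_of_one_le_left hb.le hlam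
    rw [cl, cl, mul_min_of_nonneg _ _ hlam0]
    exact le_min ((min_le_left _ _).trans hmax) ((min_le_right _ _).trans hbb)
  have key : cl ε y * x ≤ y * cl ε x := by
    have := mul_le_mul_of_nonneg_right step hx.le
    rwa [mul_assoc, mul_comm (cl ε x) x, ← mul_assoc, div_mul_cancel₀ y hx.ne'] at this
  have hcx := cl_pos hε hε1 x
  have hcy := cl_pos hε hε1 y
  have h1 : Real.log (cl ε y * x) ≤ Real.log (y * cl ε x) :=
    Real.log_le_log (by positivity) key
  rw [Real.log_mul hcy.ne' hx.ne', Real.log_mul hy.ne' hcx.ne'] at h1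
  linarith
lemma swap_eq (ε : ℝ) (hε : 0 < ε) (hε1 : ε ≤ 1) (a : ℝ → ℝ) (hmeas : Measurable a)
    (M : ℝ) (hM0 : 0 ≤ M) (hsupp : ∀ᵐ s : ℝ, s ∉ Icc (-M) M → a s = 0)
    (K : ℝ) (hK : 0 ≤ K) (hbd : ∀ᵐ s : ℝ, |a s| ≤ K) :
    (∫ r in ε..(1/ε), (1/r) * ∫ s in (-r)..r, a s * |s|)
      = ∫ s : ℝ, (a s * |s|) * (Real.log (1/ε) - Real.log (cl ε |s|)) := by
  have hεb : ε ≤ 1/ε := hε1.trans (one_le_one_div hε hε1)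
  have hb0 : (0:ℝ) < 1/ε := by positivity
  set F : ℝ × ℝ → ℝ := fun p =>
    (Ioc ε (1/ε)).indicator (fun r => 1/r) p.1
      * (Ioc (-p.1) p.1).indicator (fun s => a s * |s|) p.2 with hFdef
  -- measurability
  have hFmeas : Measurable F := by
    have h1 : Measurable fun p : ℝ × ℝ => (Ioc ε (1/ε)).indicator (fun r => 1/r) p.1 :=
      (Measurable.indicator (measurable_const.div measurable_id) measurableSet_Ioc).comp
        measurable_fst
    have h2 : Measurable fun p : ℝ × ℝ =>
        (Ioc (-p.1) p.1).indicator (fun s => a s * |s|) p.2 := by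
      have heq : (fun p : ℝ × ℝ => (Ioc (-p.1) p.1).indicator (fun s => a s * |s|) p.2)
          = ({p : ℝ × ℝ | -p.1 < p.2} ∩ {p : ℝ × ℝ | p.2 ≤ p.1}).indicator
              (fun p => a p.2 * |p.2|) := by
        funext p
        by_cases hp : p.2 ∈ Ioc (-p.1) p.1
        · rw [indicator_of_mem hp, indicator_of_mem]
          exact ⟨hp.1, hp.2⟩
        · rw [indicator_of_notMem hp, indicator_of_notMem]
          intro h; exact hp ⟨h.1, h.2⟩
      rw [heq]
      refine Measurable.indicator ?_ ?_
      · exact (hmeas.comp measurable_snd).mul measurable_snd.abs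
      · exact (measurableSet_lt measurable_fst.neg measurable_snd).inter
          (measurableSet_le measurable_snd measurable_fst)
    exact h1.mul h2
  -- integrability
  have hInt : Integrable F (volume.prod volume) := by
    have hg : Integrable ((Icc ε (1/ε) ×ˢ Icc (-M) M).indicator
        (fun _ : ℝ × ℝ => (1/ε) * (K * M))) (volume.prod volume) := by
      rw [integrable_indicator_iff (measurableSet_Icc.prod measurableSet_Icc)]
      refine integrableOn_const ?_
      rw [Measure.prod_prod]
      exact (ENNReal.mul_lt_top measure_Icc_lt_top measure_Icc_lt_top).ne
    have hae : ∀ᵐ p : ℝ × ℝ ∂(volume.prod volume),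
        (p.2 ∉ Icc (-M) M → a p.2 = 0) ∧ |a p.2| ≤ K :=
      MeasureTheory.Measure.quasiMeasurePreserving_snd.ae (hsupp.and hbd)
    refine Integrable.mono' hg hFmeas.aestronglyMeasurable ?_
    filter_upwards [hae] with p hp
    by_cases h1 : p.1 ∈ Ioc ε (1/ε)
    · by_cases h2 : p.2 ∈ Ioc (-p.1) p.1
      · by_cases h3 : p.2 ∈ Icc (-M) M
        · have hpmem : p ∈ Icc ε (1/ε) ×ˢ Icc (-M) M := ⟨⟨h1.1.le, h1.2⟩, h3⟩
          rw [hFdef]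
          simp only [indicator_of_mem h1, indicator_of_mem h2, indicator_of_mem hpmem]
          have hp1 : 0 < p.1 := lt_trans hε h1.1
          have e1 : |1 / p.1| ≤ 1/ε := by
            rw [abs_of_pos (by positivity)]
            exact one_div_le_one_div_of_le hε h1.1.le
          have e2 : |p.2| ≤ M := abs_le.2 ⟨h3.1, h3.2⟩
          have e3 : |a p.2| ≤ K := hp.2
          have hM0 : 0 ≤ M := le_trans (abs_nonneg _) e2
          calc ‖1 / p.1 * (a p.2 * |p.2|)‖ = |1 / p.1| * (|a p.2| * |p.2|) := by
                rw [Real.norm_eq_abs, abs_mul, abs_mul, abs_abs]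
            _ ≤ (1/ε) * (K * M) := by
                refine mul_le_mul e1 (mul_le_mul e3 e2 (abs_nonneg _) hK) ?_ (by positivity)
                positivity
        · have ha0 : a p.2 = 0 := hp.1 h3
          rw [hFdef]
          simp only [indicator_of_mem h2, ha0, zero_mul, mul_zero, norm_zero]
          exact indicator_nonneg (fun _ _ => mul_nonneg (by positivity) (mul_nonneg hK hM0)) p
      · rw [hFdef]
        simp only [indicator_of_notMem h2, mul_zero, norm_zero]
        exact indicator_nonneg (fun _ _ => mul_nonneg (by positivity) (mul_nonneg hK hM0)) p
    · rw [hFdef]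
      simp only [indicator_of_notMem h1, zero_mul, norm_zero]
      exact indicator_nonneg (fun _ _ => mul_nonneg (by positivity) (mul_nonneg hK hM0)) p
  -- LHS as iterated integral of F
  have lhs1 : (∫ r in ε..(1/ε), (1/r) * ∫ s in (-r)..r, a s * |s|)
      = ∫ r : ℝ, ∫ s : ℝ, F (r, s) := by
    rw [intervalIntegral.integral_of_le hεb, ← integral_indicator measurableSet_Ioc]
    congr 1
    funext r
    by_cases hr : r ∈ Ioc ε (1/ε)
    · rw [indicator_of_mem hr]
      have hr0 : 0 < r := lt_trans hε hr.1
      rw [intervalIntegral.integral_of_le (by linarith : -r ≤ r),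
        ← integral_indicator measurableSet_Ioc, ← integral_const_mul]
      congr 1
      funext s
      rw [hFdef]
      simp only [indicator_of_mem hr]
    · rw [indicator_of_notMem hr]
      symm
      rw [hFdef]
      simp only [indicator_of_notMem hr, zero_mul]
      exact integral_zero _ _
  -- Fubini
  have hswap : (∫ r : ℝ, ∫ s : ℝ, F (r, s)) = ∫ s : ℝ, ∫ r : ℝ, F (r, s) :=
    integral_integral_swap hInt
  -- inner integral
  have hinner : ∀ s : ℝ, (∫ r : ℝ, F (r, s))
      = (a s * |s|) * (Real.log (1/ε) - Real.log (cl ε |s|)) := by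
    intro s
    have hcε : ε ≤ max ε |s| := le_max_left _ _
    have hc0 : 0 < max ε |s| := lt_of_lt_of_le hε hcε
    have h1 : ∀ r : ℝ, F (r, s)
        = (a s * |s|) * ((Ioc ε (1/ε) ∩ {r : ℝ | -r < s ∧ s ≤ r}).indicator
            (fun r => 1/r) r) := by
      intro r
      by_cases hr : r ∈ Ioc ε (1/ε) <;> by_cases hs : s ∈ Ioc (-r) r
      · have hmem : r ∈ Ioc ε (1/ε) ∩ {r : ℝ | -r < s ∧ s ≤ r} := ⟨hr, hs.1, hs.2⟩
        rw [hFdef]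
        simp only [indicator_of_mem hr, indicator_of_mem hs, indicator_of_mem hmem]
        ring
      · rw [hFdef]
        simp only [indicator_of_notMem hs, mul_zero,
          indicator_of_notMem (fun h => hs ⟨(h : _ ∧ _).2.1, (h : _ ∧ _).2.2⟩ :
            r ∉ Ioc ε (1/ε) ∩ {r : ℝ | -r < s ∧ s ≤ r})]
        try ring
      · rw [hFdef]
        simp only [indicator_of_notMem hr, zero_mul,
          indicator_of_notMem (fun h => hr (h : _ ∧ _).1 :
            r ∉ Ioc ε (1/ε) ∩ {r : ℝ | -r < s ∧ s ≤ r})]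
        try ring
      · rw [hFdef]
        simp only [indicator_of_notMem hr, zero_mul,
          indicator_of_notMem (fun h => hr (h : _ ∧ _).1 :
            r ∉ Ioc ε (1/ε) ∩ {r : ℝ | -r < s ∧ s ≤ r})]
        try ring
    simp only [h1]
    rw [integral_const_mul]
    -- the set is a.e. equal to Ioc (max ε |s|) (1/ε)
    have hsub1 : Ioc (max ε |s|) (1/ε) ⊆ Ioc ε (1/ε) ∩ {r : ℝ | -r < s ∧ s ≤ r} := by
      intro r hr
      have habs : |s| < r := lt_of_le_of_lt (le_max_right ε |s|) hr.1
      have := abs_lt.1 habs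
      exact ⟨⟨lt_of_le_of_lt hcε hr.1, hr.2⟩, this.1, this.2.le⟩
    have hsub2 : Ioc ε (1/ε) ∩ {r : ℝ | -r < s ∧ s ≤ r} ⊆ Icc (max ε |s|) (1/ε) := by
      rintro r ⟨⟨hr1, hr2⟩, hr3, hr4⟩
      exact ⟨max_le hr1.le (abs_le.2 ⟨by linarith, hr4⟩), hr2⟩
    have hcae : ∀ᵐ r : ℝ, r ≠ max ε |s| := by
      have hset : {x : ℝ | ¬ x ≠ max ε |s|} = {max ε |s|} := by ext x; simp
      rw [ae_iff, hset]
      exact measure_singleton _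
    have haeeq : ((Ioc ε (1/ε) ∩ {r : ℝ | -r < s ∧ s ≤ r}).indicator (fun r => 1/r))
        =ᵐ[volume] ((Ioc (max ε |s|) (1/ε)).indicator (fun r => 1/r)) := by
      filter_upwards [hcae] with r hrne
      by_cases h : r ∈ Ioc (max ε |s|) (1/ε)
      · rw [indicator_of_mem h, indicator_of_mem (hsub1 h)]
      · rw [indicator_of_notMem h, indicator_of_notMem]
        intro hS
        obtain ⟨hq1, hq2⟩ := hsub2 hS
        exact h ⟨lt_of_le_of_ne hq1 (Ne.symm hrne), hq2⟩
    rw [integral_congr_ae haeeq, integral_indicator measurableSet_Ioc]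
    rcases le_or_gt (max ε |s|) (1/ε) with hcb | hcb
    · rw [← intervalIntegral.integral_of_le hcb, integral_one_div_of_pos hc0 hb0,
        Real.log_div hb0.ne' hc0.ne']
      have : cl ε |s| = max ε |s| := min_eq_left hcb
      rw [this]
    · rw [Ioc_eq_empty (not_lt.2 hcb.le)]
      have : cl ε |s| = 1/ε := min_eq_right hcb.le
      rw [this, sub_self, mul_zero]
      simp
  rw [lhs1, hswap]
  exact integral_congr_ae (Eventually.of_forall hinner)

lemma integrable_weighted (r₁ r₂ : ℝ) (a : ℝ → ℝ) (hmeas : Measurable a)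
    (hsupp : ∀ᵐ s : ℝ, s ∉ Icc r₁ r₂ → a s = 0) (K : ℝ) (hK : 0 ≤ K)
    (hbd : ∀ᵐ s : ℝ, |a s| ≤ K)
    (w : ℝ → ℝ) (hw : Measurable w) (B : ℝ) (hB : ∀ s, |w s| ≤ B) :
    Integrable (fun s => (a s * |s|) * w s) := by
  have hB0 : 0 ≤ B := le_trans (abs_nonneg _) (hB 0)
  have hM0 : (0:ℝ) ≤ max |r₁| |r₂| := le_trans (abs_nonneg _) (le_max_left _ _)
  have hg : Integrable ((Icc r₁ r₂).indicator
      (fun _ : ℝ => K * max |r₁| |r₂| * B)) := by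
    rw [integrable_indicator_iff measurableSet_Icc]
    exact integrableOn_const measure_Icc_lt_top.ne
  refine Integrable.mono' hg ((hmeas.mul measurable_id.abs).mul hw).aestronglyMeasurable ?_
  filter_upwards [hsupp, hbd] with s h1 h2
  by_cases hmem : s ∈ Icc r₁ r₂
  · rw [indicator_of_mem hmem]
    have hsM : |s| ≤ max |r₁| |r₂| := by
      rw [abs_le]
      constructor
      · calc -(max |r₁| |r₂|) ≤ -|r₁| := neg_le_neg (le_max_left _ _)
          _ ≤ r₁ := neg_abs_le _
          _ ≤ s := hmem.1
      · calc s ≤ r₂ := hmem.2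
          _ ≤ |r₂| := le_abs_self _
          _ ≤ max |r₁| |r₂| := le_max_right _ _
    calc ‖a s * |s| * w s‖ = |a s| * |s| * |w s| := by
          rw [Real.norm_eq_abs, abs_mul, abs_mul, abs_abs]
      _ ≤ K * max |r₁| |r₂| * B := by
          refine mul_le_mul (mul_le_mul h2 hsM (abs_nonneg _) hK) (hB s) (abs_nonneg _) ?_
          exact mul_nonneg hK hM0
  · rw [indicator_of_notMem hmem, h1 hmem]
    simp only [zero_mul, norm_zero]
    positivity

end Stmt4Aux

/-- the basic estimate for atoms of the Hardy space `ℋ¹(ℝ, |r| dr)`. -/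
theorem stmt4 (r₁ r₂ : ℝ) (h12 : r₁ < r₂) (a : ℝ → ℝ) (hmeas : Measurable a)
    (hsupp : ∀ᵐ s : ℝ, s ∉ Icc r₁ r₂ → a s = 0)
    (hbound : ∀ᵐ s : ℝ, |a s| ≤ (∫ s in r₁..r₂, |s|)⁻¹)
    (hzero : (∫ s : ℝ, a s * |s|) = 0) :
    ∀ ε : ℝ, 0 < ε → ε ≤ 1 →
      (∫ r in ε..(1/ε), (1/r) * ∫ s in (-r)..r, a s * |s|) ≤ 1 := by
  intro ε hε hε1
  set C : ℝ := ∫ s in r₁..r₂, |s| with hCdef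
  have hC : C = r₂ * |r₂| / 2 - r₁ * |r₁| / 2 := integral_abs_eq r₁ r₂
  have hC0 : 0 < C := by
    rw [hC]; have := mulAbs_strictMono h12; linarith
  have hKnn : (0:ℝ) ≤ C⁻¹ := inv_nonneg.2 hC0.le
  set M : ℝ := max |r₁| |r₂| with hMdef
  have hM0' : (0:ℝ) ≤ M := le_trans (abs_nonneg _) (le_max_left _ _)
  have hM0 : 0 < M := by
    rcases lt_or_ge 0 r₂ with h | h
    · exact lt_of_lt_of_le (abs_pos.2 h.ne') (le_max_right _ _)
    · exact lt_of_lt_of_le (abs_pos.2 (lt_of_lt_of_le h12 h).ne) (le_max_left _ _)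
  have hsubset : Icc r₁ r₂ ⊆ Icc (-M) M := by
    apply Icc_subset_Icc
    · calc -M ≤ -|r₁| := neg_le_neg (le_max_left _ _)
        _ ≤ r₁ := neg_abs_le _
    · calc r₂ ≤ |r₂| := le_abs_self _
        _ ≤ M := le_max_right _ _
  have hsupp' : ∀ᵐ s : ℝ, s ∉ Icc (-M) M → a s = 0 := by
    filter_upwards [hsupp] with s h hs
    exact h (fun hmem => hs (hsubset hmem))
  rw [swap_eq ε hε hε1 a hmeas M hM0' hsupp' C⁻¹ hKnn hbound]
  -- integrability of the weighted integrands
  have hlogb0 : 0 ≤ Real.log (1/ε) := Real.log_nonneg (one_le_one_div hε hε1)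
  have hclmeas : Measurable fun s : ℝ => Real.log (cl ε |s|) := by
    have h1 : Measurable fun s : ℝ => cl ε |s| := by
      unfold cl
      exact (measurable_const.max measurable_id.abs).min measurable_const
    exact Real.measurable_log.comp h1
  have hwbound : ∀ A : ℝ, |A| ≤ Real.log (1/ε) →
      ∀ s : ℝ, |A - Real.log (cl ε |s|)| ≤ 2 * Real.log (1/ε) := by
    intro A hA s
    calc |A - Real.log (cl ε |s|)| ≤ |A| + |Real.log (cl ε |s|)| := abs_sub _ _
      _ ≤ Real.log (1/ε) + Real.log (1/ε) := add_le_add hA (abs_log_cl_le hε hε1 _)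
      _ = 2 * Real.log (1/ε) := by ring
  have hIntw : ∀ A : ℝ, |A| ≤ Real.log (1/ε) →
      Integrable (fun s => (a s * |s|) * (A - Real.log (cl ε |s|))) := by
    intro A hA
    exact integrable_weighted r₁ r₂ a hmeas hsupp C⁻¹ hKnn hbound _
      (measurable_const.sub hclmeas) _ (hwbound A hA)
  have hIntf : Integrable (fun s : ℝ => a s * |s|) := by
    have := integrable_weighted r₁ r₂ a hmeas hsupp C⁻¹ hKnn hbound
      (fun _ => 1) measurable_const 1 (fun s => by simp)
    simpa using this
  have hIntL : Integrable (fun s : ℝ => (a s * |s|) * Real.log (cl ε |s|)) :=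
    integrable_weighted r₁ r₂ a hmeas hsupp C⁻¹ hKnn hbound _
      hclmeas _ (fun s => abs_log_cl_le hε hε1 |s|)
  -- split off the constant using `hzero`
  have e1 : ∀ A : ℝ, (∫ s : ℝ, (a s * |s|) * (A - Real.log (cl ε |s|)))
      = - ∫ s : ℝ, (a s * |s|) * Real.log (cl ε |s|) := by
    intro A
    have heq : (fun s : ℝ => (a s * |s|) * (A - Real.log (cl ε |s|)))
        = fun s : ℝ => A * (a s * |s|) - (a s * |s|) * Real.log (cl ε |s|) :=
      funext fun s => by ring
    rw [heq, integral_sub (hIntf.const_mul A) hIntL, integral_const_mul, hzero,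
      mul_zero, zero_sub]
  have hAM : |Real.log (cl ε M)| ≤ Real.log (1/ε) := abs_log_cl_le hε hε1 M
  have hA1 : |Real.log (1/ε)| ≤ Real.log (1/ε) := by
    rw [abs_of_nonneg hlogb0]
  have hkey : (∫ s : ℝ, (a s * |s|) * (Real.log (1/ε) - Real.log (cl ε |s|)))
      = ∫ s : ℝ, (a s * |s|) * (Real.log (cl ε M) - Real.log (cl ε |s|)) := by
    rw [e1 _, e1 _]
  rw [hkey]
  -- compare with the explicit dominating function
  set h : ℝ → ℝ := (Icc r₁ r₂).indicator
    (fun s => C⁻¹ * (|s| * (Real.log M - Real.log s))) with hhdef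
  have hcont : Continuous fun s : ℝ => C⁻¹ * (|s| * (Real.log M - Real.log s)) := by
    have heq : (fun s : ℝ => C⁻¹ * (|s| * (Real.log M - Real.log s)))
        = fun s : ℝ => C⁻¹ * (|s| * Real.log M - |s| * Real.log |s|) := by
      funext s; rw [Real.log_abs]; ring
    rw [heq]
    exact continuous_const.mul ((continuous_abs.mul continuous_const).sub
      (Real.continuous_mul_log.comp continuous_abs))
  have hInth : Integrable h := by
    rw [hhdef, integrable_indicator_iff measurableSet_Icc]
    exact hcont.integrableOn_Icc
  have hmono : ∀ᵐ s : ℝ, (a s * |s|) * (Real.log (cl ε M) - Real.log (cl ε |s|)) ≤ h s := by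
    filter_upwards [hsupp, hbound] with s h1 h2
    by_cases hmem : s ∈ Icc r₁ r₂
    · rw [hhdef, indicator_of_mem hmem]
      have hsM : |s| ≤ M := by
        rw [abs_le]
        exact ⟨le_trans (by
          calc -M ≤ -|r₁| := neg_le_neg (le_max_left _ _)
            _ ≤ r₁ := neg_abs_le _) hmem.1,
          le_trans hmem.2 (le_trans (le_abs_self _) (le_max_right _ _))⟩
      rcases eq_or_ne s 0 with rfl | hs0
      · simp
      · have habs0 : 0 < |s| := abs_pos.2 hs0
        have hD0 : 0 ≤ Real.log (cl ε M) - Real.log (cl ε |s|) := by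
          have hMM : cl ε |s| ≤ cl ε M := cl_mono hsM
          exact sub_nonneg.2 (Real.log_le_log (cl_pos hε hε1 _) hMM)
        have hD1 : Real.log (cl ε M) - Real.log (cl ε |s|) ≤ Real.log M - Real.log |s| :=
          cl_log_ratio hε hε1 habs0 hsM
        calc (a s * |s|) * (Real.log (cl ε M) - Real.log (cl ε |s|))
            ≤ (|a s| * |s|) * (Real.log (cl ε M) - Real.log (cl ε |s|)) := by
              exact mul_le_mul_of_nonneg_right
                (mul_le_mul_of_nonneg_right (le_abs_self _) (abs_nonneg _)) hD0
          _ ≤ (C⁻¹ * |s|) * (Real.log M - Real.log |s|) := by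
              refine mul_le_mul ?_ hD1 hD0 (by positivity)
              exact mul_le_mul_of_nonneg_right h2 (abs_nonneg _)
          _ = C⁻¹ * (|s| * (Real.log M - Real.log s)) := by
              rw [Real.log_abs]; ring
    · rw [hhdef, indicator_of_notMem hmem, h1 hmem]
      simp
  have hstep : (∫ s : ℝ, (a s * |s|) * (Real.log (cl ε M) - Real.log (cl ε |s|)))
      ≤ ∫ s : ℝ, h s :=
    integral_mono_ae (hIntw _ hAM) hInth hmono
  -- compute the integral of h
  have hinth_val : (∫ s : ℝ, h s)
      = C⁻¹ * ∫ s in r₁..r₂, |s| * (Real.log M - Real.log s) := by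
    rw [hhdef, integral_indicator measurableSet_Icc, integral_Icc_eq_integral_Ioc,
      ← intervalIntegral.integral_of_le h12.le, ← intervalIntegral.integral_const_mul]
  have hfinal : (∫ s in r₁..r₂, |s| * (Real.log M - Real.log s)) ≤ C := by
    rw [integral_weight, hC]
    exact key_ineq r₁ r₂ M h12 hMdef
  calc (∫ s : ℝ, (a s * |s|) * (Real.log (cl ε M) - Real.log (cl ε |s|)))
      ≤ ∫ s : ℝ, h s := hstep
    _ = C⁻¹ * ∫ s in r₁..r₂, |s| * (Real.log M - Real.log s) := hinth_val
    _ ≤ C⁻¹ * C := mul_le_mul_of_nonneg_left hfinal hKnn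
    _ = 1 := inv_mul_cancel₀ hC0.ne'
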